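/- Let p ∈ (1, ∞). For all vectors ξ, χ ∈ ℝ^d, one has (|ξ|^{p-2} ξ - |χ|^{p-2} χ) · (ξ - χ) ≥ min((p-1)/2, 2^{1-p}) |ξ - χ|² (|ξ| + |χ|)^{p-2}. -/

import Mathlib

open scoped RealInnerProductSpace
open Real

/-- Tangent line inequality for the convex function `x ^ q`, `1 ≤ q`. -/
private lemma rpow_tangent_convex {q x y : ℝ} (hq : 1 ≤ q) (hy : 0 < y) (hx : 0 ≤ x) :
    y ^ q + q * y ^ (q - 1) * (x - y) ≤ x ^ q := by
  have hs : -1 ≤ x / y - 1 := by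
    have : 0 ≤ x / y := div_nonneg hx hy.le
    linarith
  have hB := one_add_mul_self_le_rpow_one_add hs hq
  rw [show (1 + (x / y - 1)) = x / y by ring, div_rpow hx hy.le] at hB
  have hyq : (0:ℝ) < y ^ q := rpow_pos_of_pos hy q
  have h2 := mul_le_mul_of_nonneg_right hB hyq.le
  rw [div_mul_cancel₀ _ hyq.ne'] at h2
  calc y ^ q + q * y ^ (q - 1) * (x - y)
      = (1 + q * (x / y - 1)) * y ^ q := by
        rw [rpow_sub_one hy.ne']
        field_simp
    _ ≤ x ^ q := h2

/-- Tangent line inequality for the concave function `x ^ q`, `0 ≤ q ≤ 1`. -/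
private lemma rpow_tangent_concave {q x y : ℝ} (hq0 : 0 ≤ q) (hq1 : q ≤ 1) (hy : 0 < y)
    (hx : 0 ≤ x) : x ^ q ≤ y ^ q + q * y ^ (q - 1) * (x - y) := by
  have hs : -1 ≤ x / y - 1 := by
    have : 0 ≤ x / y := div_nonneg hx hy.le
    linarith
  have hB := rpow_one_add_le_one_add_mul_self hs hq0 hq1
  rw [show (1 + (x / y - 1)) = x / y by ring, div_rpow hx hy.le] at hB
  have hyq : (0:ℝ) < y ^ q := rpow_pos_of_pos hy q
  have h2 := mul_le_mul_of_nonneg_right hB hyq.le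
  rw [div_mul_cancel₀ _ hyq.ne'] at h2
  calc x ^ q ≤ (1 + q * (x / y - 1)) * y ^ q := h2
    _ = y ^ q + q * y ^ (q - 1) * (x - y) := by
        rw [rpow_sub_one hy.ne']
        field_simp

/-- Endpoint inequality at `t = ab`, ordered version. -/
private lemma endpoint_one {p a b : ℝ} (hp : 1 < p) (hb : 0 ≤ b) (hba : b ≤ a) :
    min ((p - 1)/2) (2 ^ (1 - p)) * (a - b) * (a + b) ^ (p - 2)
      ≤ a ^ (p - 1) - b ^ (p - 1) := by
  have ha : 0 ≤ a := hb.trans hba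
  rcases eq_or_lt_of_le ha with h0 | ha
  · have hb0 : b = 0 := le_antisymm (hba.trans h0.symm.le) hb
    rw [← h0, hb0]
    simp
  rcases le_or_gt 2 p with hp2 | hp2
  · -- convex case, constant 2^(1-p)
    set m : ℝ := (a + b) / 2 with hm_def
    have hm : 0 < m := by positivity
    have hma : m ≤ a := by simp only [hm_def]; linarith
    have hbm : b ≤ m := by simp only [hm_def]; linarith
    have h1 : m ^ (p-1) + (p-1) * m ^ (p-1-1) * (a - m) ≤ a ^ (p-1) :=
      rpow_tangent_convex (by linarith) hm ha.le
    have h2 : b ^ (p-1) ≤ m ^ (p-1) := rpow_le_rpow hb hbm (by linarith)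
    have hmp : (0:ℝ) ≤ m ^ (p-1-1) := (rpow_pos_of_pos hm _).le
    have h3 : m ^ (p-1-1) * (a - m) ≤ (p-1) * m ^ (p-1-1) * (a - m) := by
      nlinarith [mul_nonneg hmp (by linarith : (0:ℝ) ≤ a - m)]
    -- rewrite m ^ (p-2) in terms of (a+b)^(p-2)
    have hmeq : m ^ (p-1-1) = (a + b) ^ (p - 2) / 2 ^ (p - 2) := by
      rw [hm_def, div_rpow (by linarith) (by norm_num), show p - 1 - 1 = p - 2 by ring]
    have hpow2 : (2:ℝ) ^ (1 - p) * 2 ^ (p - 2) = 1 / 2 := by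
      rw [← rpow_add (by norm_num : (0:ℝ) < 2),
        show (1:ℝ) - p + (p - 2) = -1 by ring, rpow_neg_one]
      norm_num
    have hc : min ((p - 1)/2) (2 ^ (1 - p)) ≤ 2 ^ (1 - p) := min_le_right _ _
    have hS : (0:ℝ) ≤ (a + b) ^ (p - 2) := rpow_nonneg (by linarith) _
    have hkey : (2:ℝ) ^ (1 - p) * (a - b) * (a + b) ^ (p - 2)
        = m ^ (p-1-1) * (a - m) := by
      rw [hmeq, hm_def]
      have h2p : (2:ℝ) ^ (p-2) ≠ 0 := (rpow_pos_of_pos (by norm_num) _).ne'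
      field_simp
      linear_combination (a - b) * 2 * hpow2
    have hab : (0:ℝ) ≤ a - b := by linarith
    calc min ((p - 1)/2) (2 ^ (1 - p)) * (a - b) * (a + b) ^ (p - 2)
        ≤ 2 ^ (1 - p) * (a - b) * (a + b) ^ (p - 2) := by
          nlinarith [mul_nonneg hab hS]
      _ = m ^ (p-1-1) * (a - m) := hkey
      _ ≤ (p-1) * m ^ (p-1-1) * (a - m) := h3
      _ ≤ a ^ (p-1) - m ^ (p-1) := by linarith
      _ ≤ a ^ (p-1) - b ^ (p-1) := by linarith
  · -- concave case, constant (p-1)/2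
    have h1 : b ^ (p-1) ≤ a ^ (p-1) + (p-1) * a ^ (p-1-1) * (b - a) :=
      rpow_tangent_concave (by linarith) (by linarith) ha hb
    have h2 : (a + b) ^ (p - 2) ≤ a ^ (p - 2) := by
      rcases eq_or_lt_of_le hb with hb0 | hb0
      · rw [← hb0, add_zero]
      · exact rpow_le_rpow_of_nonpos ha (by linarith) (by linarith)
    have hc : min ((p - 1)/2) (2 ^ (1 - p)) ≤ (p - 1)/2 := min_le_left _ _
    have hS : (0:ℝ) ≤ (a + b) ^ (p - 2) := rpow_nonneg (by linarith) _
    have hab : (0:ℝ) ≤ a - b := by linarith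
    have heq : a ^ (p-1-1) = a ^ (p-2) := by rw [show p - 1 - 1 = p - 2 by ring]
    rw [heq] at h1
    calc min ((p - 1)/2) (2 ^ (1 - p)) * (a - b) * (a + b) ^ (p - 2)
        ≤ (p - 1) * ((a - b) * (a + b) ^ (p - 2)) := by
          nlinarith [mul_nonneg hab hS]
      _ ≤ (p - 1) * ((a - b) * a ^ (p - 2)) := by
          have : (a - b) * (a + b) ^ (p - 2) ≤ (a - b) * a ^ (p - 2) :=
            mul_le_mul_of_nonneg_left h2 hab
          nlinarith
      _ ≤ a ^ (p-1) - b ^ (p-1) := by nlinarith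

/-- Endpoint inequality at `t = ab`, symmetric product version. -/
private lemma endpoint_one' {p a b : ℝ} (hp : 1 < p) (ha : 0 ≤ a) (hb : 0 ≤ b) :
    min ((p - 1)/2) (2 ^ (1 - p)) * (a - b)^2 * (a + b) ^ (p - 2)
      ≤ (a ^ (p - 1) - b ^ (p - 1)) * (a - b) := by
  rcases le_total b a with hba | hab
  · have h := endpoint_one hp hb hba
    nlinarith [h, (by linarith : (0:ℝ) ≤ a - b)]
  · have h := endpoint_one hp ha hab
    rw [add_comm b a] at h
    nlinarith [h, (by linarith : (0:ℝ) ≤ b - a)]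

/-- Endpoint inequality at `t = -ab`. -/
private lemma endpoint_two {p a b : ℝ} (hp : 1 < p) (ha : 0 ≤ a) (hb : 0 ≤ b) :
    min ((p - 1)/2) (2 ^ (1 - p)) * (a + b) ^ (p - 1) ≤ a ^ (p - 1) + b ^ (p - 1) := by
  have hp1 : p - 1 ≠ 0 := sub_ne_zero.mpr hp.ne'
  rcases eq_or_lt_of_le (by linarith : (0:ℝ) ≤ a + b) with h0 | hab
  · have ha0 : a = 0 := by linarith
    have hb0 : b = 0 := by linarith
    rw [ha0, hb0]
    simp [zero_rpow hp1]
  rcases le_or_gt 2 p with hp2 | hp2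
  · set m : ℝ := (a + b) / 2 with hm_def
    have hm : 0 < m := by positivity
    have h1 : m ^ (p-1) + (p-1) * m ^ (p-1-1) * (a - m) ≤ a ^ (p-1) :=
      rpow_tangent_convex (by linarith) hm ha
    have h2 : m ^ (p-1) + (p-1) * m ^ (p-1-1) * (b - m) ≤ b ^ (p-1) :=
      rpow_tangent_convex (by linarith) hm hb
    have e : b - m = -(a - m) := by rw [hm_def]; ring
    rw [e] at h2
    have hsum : 2 * m ^ (p-1) ≤ a ^ (p-1) + b ^ (p-1) := by linarith
    have hc : min ((p - 1)/2) (2 ^ (1 - p)) ≤ 2 ^ (1 - p) := min_le_right _ _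
    have hS : (0:ℝ) ≤ (a + b) ^ (p - 1) := rpow_nonneg (by linarith) _
    have hkey : (2:ℝ) ^ (1 - p) * (a + b) ^ (p - 1) = m ^ (p-1) := by
      have : (a + b) ^ (p-1) = 2 ^ (p-1) * m ^ (p-1) := by
        rw [hm_def, ← mul_rpow (by norm_num) (by positivity)]
        ring_nf
      rw [this, ← mul_assoc, ← rpow_add (by norm_num : (0:ℝ) < 2),
        show (1:ℝ) - p + (p - 1) = 0 by ring, rpow_zero, one_mul]
    have hmq : (0:ℝ) ≤ m ^ (p-1) := (rpow_pos_of_pos hm _).le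
    nlinarith [hkey, hsum, mul_le_mul_of_nonneg_right hc hS]
  · -- subadditivity case
    have hc : min ((p - 1)/2) (2 ^ (1 - p)) ≤ (p - 1)/2 := min_le_left _ _
    have hsub : (a + b) ^ (p-1) ≤ a ^ (p-1) + b ^ (p-1) := by
      rcases eq_or_lt_of_le ha with ha0 | ha0
      · rw [← ha0, zero_add, zero_rpow hp1]
        linarith
      rcases eq_or_lt_of_le hb with hb0 | hb0
      · rw [← hb0, add_zero, zero_rpow hp1]
        linarith
      have h1 : (a + b) ^ (p-1-1) ≤ a ^ (p-1-1) :=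
        rpow_le_rpow_of_nonpos ha0 (by linarith) (by linarith)
      have h2 : (a + b) ^ (p-1-1) ≤ b ^ (p-1-1) :=
        rpow_le_rpow_of_nonpos hb0 (by linarith) (by linarith)
      have ea : a ^ (p-1-1) * a = a ^ (p-1) := by
        rw [← rpow_add_one ha0.ne' (p-1-1), show p-1-1+1 = p-1 by ring]
      have eb : b ^ (p-1-1) * b = b ^ (p-1) := by
        rw [← rpow_add_one hb0.ne' (p-1-1), show p-1-1+1 = p-1 by ring]
      have es : (a + b) ^ (p-1-1) * (a + b) = (a + b) ^ (p-1) := by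
        rw [← rpow_add_one hab.ne' (p-1-1), show p-1-1+1 = p-1 by ring]
      nlinarith [mul_le_mul_of_nonneg_right h1 ha, mul_le_mul_of_nonneg_right h2 hb]
    have hS : (0:ℝ) ≤ (a + b) ^ (p - 1) := rpow_nonneg (by linarith) _
    nlinarith [mul_le_mul_of_nonneg_right hc hS]

/-- The key scalar inequality. -/
private lemma key_scalar {p a b t : ℝ} (hp : 1 < p) (ha : 0 ≤ a) (hb : 0 ≤ b)
    (ht1 : -(a * b) ≤ t) (ht2 : t ≤ a * b) :
    min ((p - 1)/2) (2 ^ (1 - p)) * (a^2 + b^2 - 2*t) * (a + b) ^ (p - 2)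
      ≤ a ^ (p-2) * a^2 + b ^ (p-2) * b^2 - (a ^ (p-2) + b ^ (p-2)) * t := by
  set c : ℝ := min ((p - 1)/2) (2 ^ (1 - p)) with hc_def
  have hp1 : p - 1 ≠ 0 := sub_ne_zero.mpr hp.ne'
  have hea : a ^ (p-2) * a = a ^ (p-1) := by
    rcases eq_or_lt_of_le ha with h0 | h0
    · rw [← h0, zero_rpow hp1]; ring
    · rw [← rpow_add_one h0.ne' (p-2), show p-2+1 = p-1 by ring]
  have heb : b ^ (p-2) * b = b ^ (p-1) := by
    rcases eq_or_lt_of_le hb with h0 | h0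
    · rw [← h0, zero_rpow hp1]; ring
    · rw [← rpow_add_one h0.ne' (p-2), show p-2+1 = p-1 by ring]
  rcases eq_or_lt_of_le (by linarith : (0:ℝ) ≤ a + b) with h0 | hab
  · have ha0 : a = 0 := by linarith
    have hb0 : b = 0 := by linarith
    have ht0 : t = 0 := by rw [ha0] at ht1 ht2; simp at ht1 ht2; linarith
    simp [ha0, hb0, ht0]
  have hes : (a + b) ^ (p-2) * (a + b)^2 = (a + b) ^ (p-1) * (a + b) := by
    have h : (a + b) ^ (p-1) = (a + b) ^ (p-2) * (a + b) := by
      rw [← rpow_add_one hab.ne' (p-2), show p-2+1 = p-1 by ring]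
    rw [h]
    ring
  have h1 := endpoint_one' hp ha hb
  have h2' := endpoint_two hp ha hb
  have h2 : c * ((a + b) ^ (p-1) * (a + b)) ≤ (a ^ (p-1) + b ^ (p-1)) * (a + b) := by
    nlinarith [mul_le_mul_of_nonneg_right h2' (by linarith : (0:ℝ) ≤ a + b)]
  rw [← hea, ← heb] at h1 h2
  rw [← hes] at h2
  -- now affine in t
  rcases le_or_gt 0 ((a ^ (p-2) + b ^ (p-2)) - 2 * c * (a + b) ^ (p-2)) with hD | hD
  · nlinarith [h1, mul_nonneg hD (by linarith : (0:ℝ) ≤ a*b - t)]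
  · nlinarith [h2, mul_nonneg (neg_nonneg.mpr hD.le) (by linarith : (0:ℝ) ≤ t + a*b)]

theorem pLaplace_strong_monotonicity (d : ℕ) (p : ℝ) (hp : 1 < p)
    (ξ χ : EuclideanSpace ℝ (Fin d)) :
    ⟪(‖ξ‖ ^ (p - 2)) • ξ - (‖χ‖ ^ (p - 2)) • χ, ξ - χ⟫
      ≥ min ((p - 1)/2) (2 ^ (1 - p)) * ‖ξ - χ‖^2 * (‖ξ‖ + ‖χ‖) ^ (p - 2) := by
  have hinner : ⟪(‖ξ‖ ^ (p - 2)) • ξ - (‖χ‖ ^ (p - 2)) • χ, ξ - χ⟫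
      = ‖ξ‖ ^ (p-2) * ‖ξ‖^2 + ‖χ‖ ^ (p-2) * ‖χ‖^2
        - (‖ξ‖ ^ (p-2) + ‖χ‖ ^ (p-2)) * ⟪ξ, χ⟫ := by
    simp only [inner_sub_left, inner_sub_right, real_inner_smul_left,
      real_inner_self_eq_norm_sq, real_inner_comm χ ξ]
    ring
  have hns : ‖ξ - χ‖^2 = ‖ξ‖^2 - 2 * ⟪ξ, χ⟫ + ‖χ‖^2 := norm_sub_sq_real ξ χ
  have hCS := abs_real_inner_le_norm ξ χ
  obtain ⟨hCS1, hCS2⟩ := abs_le.mp hCS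
  have hk := key_scalar (a := ‖ξ‖) (b := ‖χ‖) (t := ⟪ξ, χ⟫) hp (norm_nonneg ξ)
    (norm_nonneg χ) (by linarith) (by linarith)
  rw [ge_iff_le, hinner, hns]
  have heq : min ((p - 1)/2) (2 ^ (1 - p)) * (‖ξ‖^2 - 2 * ⟪ξ, χ⟫ + ‖χ‖^2) * (‖ξ‖ + ‖χ‖) ^ (p - 2)
      = min ((p - 1)/2) (2 ^ (1 - p)) * (‖ξ‖^2 + ‖χ‖^2 - 2 * ⟪ξ, χ⟫) * (‖ξ‖ + ‖χ‖) ^ (p - 2) := by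
    ring
  rw [heq]
  exact hk
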